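/- Let H be a finitely generated projective cocommutative Hopf algebra over a commutative ring k, and A a commutative left H-module algebra (so A is a right H*-comodule algebra). If Σ_i a_i ⊗ f_i ∈ A ⊗ H* is an invertible grouplike element of the coring A⊗H*, then φ : H → A defined by φ(h) = Σ_i a_i f_i(h) is a normalized Sweedler 1-cocycle: φ(1_H) = 1_A and φ(hh') = Σ (h_{(1)}·φ(h')) φ(h_{(2)}) for all h, h' ∈ H. -/
import Mathlib
set_option synthInstance.maxHeartbeats 1000000
set_option maxHeartbeats 1600000
set_option maxRecDepth 8000


open TensorProduct

universe u

namespace SweedlerHarrison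

variable {k H A : Type u} [CommRing k] [CommRing H] [HopfAlgebra k H]
  [CommRing A] [Algebra k A] [Module H A] [IsScalarTower k H A]

/-- The canonical map `A ⊗ H^* → Hom(H, A)`, `Σ aᵢ ⊗ fᵢ ↦ (h ↦ Σ aᵢ fᵢ(h))`. -/
noncomputable def Phi : A ⊗[k] Module.Dual k H →ₗ[k] (H →ₗ[k] A) :=
  (dualTensorHom k H A) ∘ₗ (TensorProduct.comm k A (Module.Dual k H)).toLinearMap

/-- Convolution multiplication on `H^* = Dual k H`. -/
noncomputable def convD : Module.Dual k H ⊗[k] Module.Dual k H →ₗ[k] Module.Dual k H :=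
  (LinearMap.dualMap (Coalgebra.comul (R := k) (A := H))) ∘ₗ TensorProduct.dualDistrib k H H

/-- The multiplication of the commutative algebra `A ⊗ H^*`
(convolution in the second factor). -/
noncomputable def mulAD :
    (A ⊗[k] Module.Dual k H) ⊗[k] (A ⊗[k] Module.Dual k H) →ₗ[k] A ⊗[k] Module.Dual k H :=
  (TensorProduct.map (LinearMap.mul' k A) convD) ∘ₗ
    (TensorProduct.tensorTensorTensorComm k A (Module.Dual k H) A (Module.Dual k H)).toLinearMap

/-- Left multiplication by `x` in the algebra `A ⊗ H^*`. -/
noncomputable def mulADLeft (x : A ⊗[k] Module.Dual k H) :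
    A ⊗[k] Module.Dual k H →ₗ[k] A ⊗[k] Module.Dual k H :=
  mulAD ∘ₗ TensorProduct.mk k _ _ x

/-- The unit `1 ⊗ ε` of `A ⊗ H^*`. -/
noncomputable def oneAD : A ⊗[k] Module.Dual k H :=
  (1 : A) ⊗ₜ[k] (Bialgebra.counitAlgHom k H).toLinearMap

/-- `Σ aᵢ ⊗ Δ_{H^*}(fᵢ) ∈ A ⊗ (H ⊗ H)^*`:
the comultiplication of the coring `A ⊗ H^*` applied to `x`, where the comultiplication of
`H^*` (dual to the multiplication of `H`) is computed in `(H ⊗ H)^*`. -/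
noncomputable def lhsGL : A ⊗[k] Module.Dual k H →ₗ[k] A ⊗[k] Module.Dual k (H ⊗[k] H) :=
  LinearMap.lTensor A (LinearMap.dualMap (LinearMap.mul' k H))

/-- The comparison map `(A ⊗ H^*) ⊗ H^* → A ⊗ (H ⊗ H)^*`. -/
noncomputable def nuAD :
    (A ⊗[k] Module.Dual k H) ⊗[k] Module.Dual k H →ₗ[k] A ⊗[k] Module.Dual k (H ⊗[k] H) :=
  (LinearMap.lTensor A (TensorProduct.dualDistrib k H H)) ∘ₗ
    (TensorProduct.assoc k A (Module.Dual k H) (Module.Dual k H)).toLinearMap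

/-- `x` is a grouplike element of the coring `A ⊗ H^*`, i.e. a normalized Harrison
1-cocycle: `Σ aᵢ ⊗ Δ(fᵢ) = Σ_{i,j} aᵢ(a_j)₍₀₎ ⊗ fᵢ(a_j)₍₁₎ ⊗ f_j` and `Σ aᵢ fᵢ(1) = 1`. -/
noncomputable def IsGrouplikeAD (ρd : A →ₗ[k] A ⊗[k] Module.Dual k H)
    (x : A ⊗[k] Module.Dual k H) : Prop :=
  lhsGL x = nuAD ((LinearMap.rTensor (Module.Dual k H) (mulADLeft x))
      ((LinearMap.rTensor (Module.Dual k H) ρd) x)) ∧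
    Phi x 1 = 1

/-- The Sweedler cocycle expression `Σ (h₍₁₎ · φ(h')) φ(h₍₂₎)`. -/
noncomputable def sweedlerRHS (φ : H →ₗ[k] A) (h h' : H) : A :=
  TensorProduct.lift
    (LinearMap.mk₂ k (fun h₁ h₂ => (h₁ • (φ h')) * (φ h₂))
      (fun m m' n => by simp [add_smul, add_mul])
      (fun t m n => by simp [smul_assoc, smul_mul_assoc])
      (fun m n n' => by simp [mul_add])
      (fun t m n => by simp [mul_smul_comm]))
    (Coalgebra.comul (R := k) (A := H) h)

lemma hsmul_comm (c : k) (h : H) (a : A) : h • (c • a) = c • (h • a) := by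
  calc h • (c • a) = h • ((c • (1 : H)) • a) := by rw [smul_assoc, one_smul]
    _ = (h * (c • (1 : H))) • a := (mul_smul _ _ _).symm
    _ = ((c • (1 : H)) * h) • a := by rw [mul_comm]
    _ = (c • h) • a := by rw [smul_mul_assoc, one_mul]
    _ = c • (h • a) := smul_assoc _ _ _

/-- The `H`-action on `A` as a `k`-bilinear map. -/
noncomputable def actL : H →ₗ[k] A →ₗ[k] A :=
  LinearMap.mk₂ k (fun h a => h • a)
    (fun m m' a => add_smul m m' a)
    (fun c m a => smul_assoc c m a)
    (fun m a b => smul_add m a b)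
    (fun c m a => hsmul_comm c m a)

@[simp] lemma actL_apply (h : H) (a : A) : actL (k := k) h a = h • a := rfl

/-- The analogue of `Phi` for `A ⊗ (H ⊗ H)^*`. -/
noncomputable def Phi2 : A ⊗[k] Module.Dual k (H ⊗[k] H) →ₗ[k] (H ⊗[k] H →ₗ[k] A) :=
  (dualTensorHom k (H ⊗[k] H) A) ∘ₗ
    (TensorProduct.comm k A (Module.Dual k (H ⊗[k] H))).toLinearMap

@[simp] lemma Phi_tmul (a : A) (f : Module.Dual k H) (h : H) :
    Phi (a ⊗ₜ[k] f) h = f h • a := by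
  simp [Phi]

@[simp] lemma Phi2_tmul (a : A) (f : Module.Dual k (H ⊗[k] H)) (t : H ⊗[k] H) :
    Phi2 (a ⊗ₜ[k] f) t = f t • a := by
  simp [Phi2]

/-- Convolution of two maps `H → A`. -/
noncomputable def convPhi (φ ψ : H →ₗ[k] A) : H ⊗[k] H →ₗ[k] A :=
  (LinearMap.mul' k A) ∘ₗ TensorProduct.map φ ψ

@[simp] lemma convPhi_tmul (φ ψ : H →ₗ[k] A) (h₁ h₂ : H) :
    convPhi φ ψ (h₁ ⊗ₜ[k] h₂) = φ h₁ * ψ h₂ := by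
  simp [convPhi]

lemma convPhi_add_left (φ φ' ψ : H →ₗ[k] A) :
    convPhi (φ + φ') ψ = convPhi φ ψ + convPhi φ' ψ := by
  apply TensorProduct.ext'; intro h₁ h₂; simp [add_mul]

lemma convPhi_zero_left (ψ : H →ₗ[k] A) : convPhi (0 : H →ₗ[k] A) ψ = 0 := by
  apply TensorProduct.ext'; intro h₁ h₂; simp

lemma convPhi_add_right (φ ψ ψ' : H →ₗ[k] A) :
    convPhi φ (ψ + ψ') = convPhi φ ψ + convPhi φ ψ' := by
  apply TensorProduct.ext'; intro h₁ h₂; simp [mul_add]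

lemma convPhi_zero_right (φ : H →ₗ[k] A) : convPhi φ (0 : H →ₗ[k] A) = 0 := by
  apply TensorProduct.ext'; intro h₁ h₂; simp

lemma convPhi_smul_right (c : k) (φ ψ : H →ₗ[k] A) :
    convPhi φ (c • ψ) = c • convPhi φ ψ := by
  apply TensorProduct.ext'; intro h₁ h₂; simp [mul_smul_comm]

/-- Lemma A: `Phi` turns `mulAD` into convolution. -/
lemma Phi_mulAD (x y : A ⊗[k] Module.Dual k H) (h : H) :
    Phi (mulAD (x ⊗ₜ[k] y)) h = convPhi (Phi x) (Phi y) (Coalgebra.comul (R := k) h) := by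
  induction x using TensorProduct.induction_on with
  | zero =>
    simp [mulAD, convPhi_zero_left]
  | tmul a f =>
    induction y using TensorProduct.induction_on with
    | zero => simp [mulAD, convPhi_zero_right]
    | tmul b g =>
      have : ∀ t : H ⊗[k] H,
          (TensorProduct.dualDistrib k H H (f ⊗ₜ[k] g)) t • (a * b)
            = convPhi (Phi (a ⊗ₜ[k] f)) (Phi (b ⊗ₜ[k] g)) t := by
        intro t
        induction t using TensorProduct.induction_on with
        | zero => simp
        | tmul h₁ h₂ =>
          simp only [TensorProduct.dualDistrib_apply, convPhi_tmul, Phi_tmul]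
          rw [smul_mul_smul_comm]
        | add u v hu hv => simp [add_smul, hu, hv]
      simp only [mulAD, LinearMap.coe_comp, Function.comp_apply, LinearEquiv.coe_coe,
        TensorProduct.tensorTensorTensorComm_tmul, TensorProduct.map_tmul,
        LinearMap.mul'_apply, Phi_tmul, convD]
      exact this _
    | add u v hu hv =>
      simp only [TensorProduct.tmul_add, map_add, LinearMap.add_apply, hu, hv]
      rw [← LinearMap.add_apply, ← convPhi_add_right, ← map_add]
  | add u v hu hv =>
    simp only [TensorProduct.add_tmul, map_add, LinearMap.add_apply, hu, hv]
    rw [← LinearMap.add_apply, ← convPhi_add_left, ← map_add]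

/-- Lemma B: evaluating `Phi2 ∘ nuAD` on a pure tensor in the second factor. -/
lemma Phi2_nuAD (w : A ⊗[k] Module.Dual k H) (f : Module.Dual k H) (h h' : H) :
    Phi2 (nuAD (w ⊗ₜ[k] f)) (h ⊗ₜ[k] h') = f h' • Phi w h := by
  induction w using TensorProduct.induction_on with
  | zero => simp [nuAD]
  | tmul a g =>
    simp [nuAD, mul_comm, smul_smul]
  | add u v hu hv =>
    simp only [TensorProduct.add_tmul, map_add, LinearMap.add_apply, hu, hv, smul_add]

/-- Lemma C: `Phi2 ∘ lhsGL` computes `Phi` at products. -/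
lemma Phi2_lhsGL (x : A ⊗[k] Module.Dual k H) (h h' : H) :
    Phi2 (lhsGL x) (h ⊗ₜ[k] h') = Phi x (h * h') := by
  induction x using TensorProduct.induction_on with
  | zero => simp [lhsGL]
  | tmul a f => simp [lhsGL]
  | add u v hu hv => simp only [map_add, LinearMap.add_apply, hu, hv]

/-- Lemma D: the key computation of the right-hand side of the grouplike condition. -/
lemma keyD (ρd : A →ₗ[k] A ⊗[k] Module.Dual k H)
    (hρd : ∀ (a : A) (h : H), Phi (ρd a) h = h • a)
    (x : A ⊗[k] Module.Dual k H) (h h' : H) (w : A ⊗[k] Module.Dual k H) :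
    Phi2 (nuAD ((LinearMap.rTensor (Module.Dual k H) (mulADLeft x))
        ((LinearMap.rTensor (Module.Dual k H) ρd) w))) (h ⊗ₜ[k] h')
      = convPhi (Phi x) (actL.flip (Phi w h')) (Coalgebra.comul (R := k) h) := by
  induction w using TensorProduct.induction_on with
  | zero =>
    simp only [map_zero, LinearMap.zero_apply]
    rw [convPhi_zero_right]
    simp
  | tmul a f =>
    have h1 : (LinearMap.rTensor (Module.Dual k H) ρd) (a ⊗ₜ[k] f) = (ρd a) ⊗ₜ[k] f :=
      LinearMap.rTensor_tmul _ _ _ _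
    have h2 : (LinearMap.rTensor (Module.Dual k H) (mulADLeft x)) ((ρd a) ⊗ₜ[k] f)
        = (mulAD (x ⊗ₜ[k] (ρd a))) ⊗ₜ[k] f := LinearMap.rTensor_tmul _ _ _ _
    rw [h1, h2, Phi2_nuAD, Phi_mulAD]
    have h3 : Phi (ρd a) = actL.flip a := by
      apply LinearMap.ext; intro s; simp [hρd]
    have h4 : actL.flip (Phi (a ⊗ₜ[k] f) h') = f h' • (actL.flip a : H →ₗ[k] A) := by
      rw [Phi_tmul, map_smul]
    rw [h3, h4, convPhi_smul_right]
    simp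
  | add u v hu hv =>
    simp only [map_add, LinearMap.add_apply, hu, hv, convPhi_add_right]

end SweedlerHarrison

open SweedlerHarrison in
/-- let `H` be a finitely generated projective cocommutative Hopf algebra over
`k`, and `A` a commutative left `H`-module algebra (so that `A` is a right `H^*`-comodule
algebra, with coaction `ρd` determined by `Σ a₍₀₎ a₍₁₎(h) = h • a`). If
`x = Σ aᵢ ⊗ fᵢ ∈ A ⊗ H^*` is an invertible grouplike element of the coring `A ⊗ H^*`, then
`φ : H → A`, `φ(h) = Σ aᵢ fᵢ(h)`, is a normalized Sweedler 1-cocycle: `φ(1) = 1` and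
`φ(hh') = Σ (h₍₁₎ · φ(h')) φ(h₍₂₎)`. -/
theorem sweedler_cocycle_of_grouplike
    {k H A : Type u} [CommRing k] [CommRing H] [HopfAlgebra k H]
    [Module.Finite k H] [Module.Projective k H]
    (hcocomm : ∀ s : H, (TensorProduct.comm k H H) (Coalgebra.comul s) = Coalgebra.comul s)
    [CommRing A] [Algebra k A] [Module H A] [IsScalarTower k H A]
    -- `A` is an `H`-module algebra
    (hact_mul : ∀ (h : H) (a b : A),
      h • (a * b) = TensorProduct.lift
        (LinearMap.mk₂ k (fun h₁ h₂ => (h₁ • a) * (h₂ • b))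
          (fun m m' n => by simp [add_smul, add_mul])
          (fun t m n => by simp [smul_assoc, smul_mul_assoc])
          (fun m n n' => by simp [add_smul, mul_add])
          (fun t m n => by simp [smul_assoc, mul_smul_comm]))
        (Coalgebra.comul (R := k) (A := H) h))
    (hact_one : ∀ h : H, h • (1 : A) = algebraMap k A (Bialgebra.counitAlgHom k H h))
    -- the associated coaction `ρd : A → A ⊗ H^*`
    (ρd : A →ₗ[k] A ⊗[k] Module.Dual k H)
    (hρd : ∀ (a : A) (h : H), Phi (ρd a) h = h • a)
    -- `x` is an invertible grouplike element of the coring `A ⊗ H^*`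
    (x : A ⊗[k] Module.Dual k H)
    (hgl : IsGrouplikeAD ρd x)
    (hinv : ∃ y : A ⊗[k] Module.Dual k H, mulAD (x ⊗ₜ[k] y) = oneAD ∧ mulAD (y ⊗ₜ[k] x) = oneAD) :
    Phi x 1 = 1 ∧ ∀ h h' : H, Phi x (h * h') = sweedlerRHS (Phi x) h h' := by
  obtain ⟨hgl1, hgl2⟩ := hgl
  refine ⟨hgl2, fun h h' => ?_⟩
  have step1 : Phi x (h * h')
      = convPhi (Phi x) (actL.flip (Phi x h')) (Coalgebra.comul (R := k) h) := by
    rw [← Phi2_lhsGL x h h', hgl1, keyD ρd hρd x h h' x]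
  rw [step1]
  unfold sweedlerRHS
  conv_rhs => rw [← hcocomm h]
  generalize Coalgebra.comul (R := k) (A := H) h = t
  induction t using TensorProduct.induction_on with
  | zero => simp
  | tmul h₁ h₂ => simp [mul_comm]
  | add u v hu hv => simp only [map_add, hu, hv]
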